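/- Let k be a field, let R be a finitely generated commutative k-algebra, and let A be a k-subalgebra of R which is a field. Then A is finite-dimensional as a k-vector space. -/

import Mathlib

/-- If `k` is a field, `R` a finitely generated commutative
`k`-algebra, and `A` a `k`-subalgebra of `R` which is a field, then `A` is
finite-dimensional over `k`. -/
theorem subfield_of_finitely_generated_is_finite_dimensional
    (k : Type*) [Field k] (R : Type*) [CommRing R] [Algebra k R]
    (hfg : Algebra.FiniteType k R)
    (A : Subalgebra k R) (hA : IsField A) :
    FiniteDimensional k A := by
  letI : Field A := hA.toField
  have hnt : Nontrivial R := by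
    rcases hA.exists_pair_ne with ⟨a, b, hab⟩
    exact ⟨a, b, fun h => hab (Subtype.ext h)⟩
  obtain ⟨m, hm⟩ := Ideal.exists_maximal R
  letI : Field (R ⧸ m) := Ideal.Quotient.field m
  haveI : Algebra.FiniteType k (R ⧸ m) :=
    hfg.trans (Algebra.FiniteType.of_surjective
      (Ideal.Quotient.mkₐ R m) (Ideal.Quotient.mkₐ_surjective R m))
  haveI : Module.Finite k (R ⧸ m) := finite_of_finite_type_of_isJacobsonRing k (R ⧸ m)
  let g : A →ₐ[k] R ⧸ m := (Ideal.Quotient.mkₐ k m).comp A.val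
  exact FiniteDimensional.of_injective g.toLinearMap (RingHom.injective g.toRingHom)
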